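/- arXiv:1405.5027 — 2 statements merged into one kernel-verified Lean document; each statement's English description precedes it below -/
import Mathlib

section
/- For every λ > 0, the integral of x·φ(x)²·Φ(x/λ) over the real line equals 1/(4π·√(1+2λ²)). -/
open Real MeasureTheory

noncomputable def phi (x : ℝ) : ℝ := (1 / Real.sqrt (2 * Real.pi)) * Real.exp (-x ^ 2 / 2)

noncomputable def Phi (x : ℝ) : ℝ := ∫ t in Set.Iic x, phi t

lemma phi_sq (x : ℝ) : phi x ^ 2 = (1 / (2 * Real.pi)) * Real.exp (-x ^ 2) := by
  have h2π : (0:ℝ) ≤ 2 * Real.pi := by positivity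
  have hs : Real.sqrt (2 * Real.pi) ^ 2 = 2 * Real.pi := Real.sq_sqrt h2π
  have he : Real.exp (-x ^ 2 / 2) ^ 2 = Real.exp (-x ^ 2) := by
    rw [sq, ← Real.exp_add]; ring_nf
  unfold phi
  rw [mul_pow, div_pow, one_pow, hs, he]

lemma inner_int (a : ℝ) :
    ∫ x in Set.Ioi a, x * Real.exp (-x ^ 2) = Real.exp (-a ^ 2) / 2 := by
  have hderiv : ∀ x ∈ Set.Ici a,
      HasDerivAt (fun y : ℝ => -Real.exp (-y ^ 2) / 2) (x * Real.exp (-x ^ 2)) x := by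
    intro x _
    have h1 : HasDerivAt (fun y : ℝ => -y ^ 2) (-(2 * x)) x := by
      simpa using (hasDerivAt_pow 2 x).fun_neg
    have h2 := h1.exp
    exact (h2.fun_neg.div_const 2).congr_deriv (by ring)
  have hint : IntegrableOn (fun x => x * Real.exp (-x ^ 2)) (Set.Ioi a) := by
    have := integrable_mul_exp_neg_mul_sq (one_pos)
    simpa using this.integrableOn
  have htend : Filter.Tendsto (fun y : ℝ => -Real.exp (-y ^ 2) / 2) Filter.atTop (nhds 0) := by
    have h1 : Filter.Tendsto (fun y : ℝ => Real.exp (-y ^ 2)) Filter.atTop (nhds 0) := by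
      exact Real.tendsto_exp_neg_atTop_nhds_zero.comp (Filter.tendsto_pow_atTop two_ne_zero)
    simpa using (h1.neg.div_const 2)
  have := integral_Ioi_of_hasDerivAt_of_tendsto' hderiv hint htend
  rw [this]; ring

theorem stmt2 (lam : ℝ) (hlam : 0 < lam) :
    ∫ x : ℝ, x * (phi x) ^ 2 * Phi (x / lam) =
      1 / (4 * Real.pi * Real.sqrt (1 + 2 * lam ^ 2)) := by
  have hphi_int : Integrable phi := by
    unfold phi
    apply Integrable.const_mul
    have h := integrable_exp_neg_mul_sq (show (0:ℝ) < 1/2 by norm_num)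
    have : (fun x : ℝ => Real.exp (-x ^ 2 / 2)) = fun x => Real.exp (-(1/2) * x ^ 2) := by
      funext x; ring_nf
    rw [this]; exact h
  have hxphi_int : Integrable (fun x : ℝ => x * phi x ^ 2) := by
    have h := (integrable_mul_exp_neg_mul_sq (one_pos)).const_mul (1 / (2 * Real.pi))
    have : (fun x : ℝ => x * phi x ^ 2)
        = fun x => (1 / (2 * Real.pi)) * (x * Real.exp (-1 * x ^ 2)) := by
      funext x; rw [phi_sq]; ring_nf
    rw [this]; exact h
  set s : Set (ℝ × ℝ) := {p : ℝ × ℝ | lam * p.2 ≤ p.1} with hs_def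
  set g : ℝ × ℝ → ℝ := fun p => p.1 * phi p.1 ^ 2 * phi p.2 with hg_def
  have hs : MeasurableSet s :=
    measurableSet_le (measurable_const.mul measurable_snd) measurable_fst
  have hg : Integrable g (volume.prod volume) := hxphi_int.mul_prod hphi_int
  have hind : Integrable (s.indicator g) (volume.prod volume) := hg.indicator hs
  have key : ∀ x : ℝ, x * phi x ^ 2 * Phi (x / lam) = ∫ t : ℝ, s.indicator g (x, t) := by
    intro x
    have heq : (fun t => s.indicator g (x, t))
        = (Set.Iic (x / lam)).indicator (fun t => x * phi x ^ 2 * phi t) := by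
      funext t
      simp only [Set.indicator_apply, Set.mem_setOf_eq, Set.mem_Iic, hs_def, hg_def]
      exact if_congr (((le_div_iff₀ hlam).trans (by rw [mul_comm])).symm) rfl rfl
    rw [heq, integral_indicator measurableSet_Iic, MeasureTheory.integral_const_mul]
    rfl
  have stepC : ∀ t : ℝ, (∫ x : ℝ, s.indicator g (x, t))
      = (1 / (4 * Real.pi)) * ((1 / Real.sqrt (2 * Real.pi))
          * Real.exp (-(lam ^ 2 + 1/2) * t ^ 2)) := by
    intro t
    have heq : (fun x => s.indicator g (x, t))
        = (Set.Ici (lam * t)).indicator (fun x => (phi t * (1 / (2 * Real.pi)))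
            * (x * Real.exp (-x ^ 2))) := by
      funext x
      simp only [Set.indicator_apply, Set.mem_setOf_eq, Set.mem_Ici, hs_def, hg_def]
      exact if_congr Iff.rfl (by rw [phi_sq]; ring) rfl
    rw [heq, integral_indicator measurableSet_Ici, integral_Ici_eq_integral_Ioi,
      MeasureTheory.integral_const_mul, inner_int]
    have hexp : Real.exp (-t ^ 2 / 2) * Real.exp (-(lam * t) ^ 2)
        = Real.exp (-(lam ^ 2 + 1/2) * t ^ 2) := by
      rw [← Real.exp_add]; ring_nf
    unfold phi
    linear_combination (1 / (4 * Real.pi * Real.sqrt (2 * Real.pi))) * hexp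
  simp only [key]
  have hind' : Integrable (Function.uncurry fun x t => s.indicator g (x, t))
      (volume.prod volume) := hind
  rw [MeasureTheory.integral_integral_swap hind']
  simp only [stepC]
  rw [MeasureTheory.integral_const_mul, MeasureTheory.integral_const_mul,
    integral_gaussian]
  -- algebra
  have h1 : (0:ℝ) < lam ^ 2 + 1/2 := by positivity
  have h2 : Real.sqrt (1 + 2 * lam ^ 2) = Real.sqrt 2 * Real.sqrt (lam ^ 2 + 1/2) := by
    rw [← Real.sqrt_mul (by norm_num : (0:ℝ) ≤ 2)]
    congr 1; ring
  have h3 : Real.sqrt (2 * Real.pi) = Real.sqrt 2 * Real.sqrt Real.pi :=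
    Real.sqrt_mul (by norm_num) _
  have h4 : Real.sqrt (Real.pi / (lam ^ 2 + 1/2))
      = Real.sqrt Real.pi / Real.sqrt (lam ^ 2 + 1/2) :=
    Real.sqrt_div Real.pi_pos.le _
  have hπ : (0:ℝ) < Real.pi := Real.pi_pos
  have hsπ : (0:ℝ) < Real.sqrt Real.pi := Real.sqrt_pos.mpr hπ
  have hs2 : (0:ℝ) < Real.sqrt 2 := Real.sqrt_pos.mpr (by norm_num)
  have hsb : (0:ℝ) < Real.sqrt (lam ^ 2 + 1/2) := Real.sqrt_pos.mpr h1
  rw [h2, h3, h4]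
  field_simp
end

section
/- For every λ > 0, the integral of x²·φ(x)·Φ(x/λ)² over the real line equals 1/4 + λ/(π(1+λ²)√(2+λ²)) + (1/(2π))·arctan(1/(λ√(2+λ²))). -/
open Real MeasureTheory Filter Set

lemma phi_eq (x : ℝ) : phi x = (1 / Real.sqrt (2 * Real.pi)) * Real.exp (-(1/2) * x ^ 2) := by
  unfold phi; ring_nf

lemma int_pow_gauss (n : ℕ) {b : ℝ} (hb : 0 < b) :
    Integrable fun x : ℝ => x ^ n * Real.exp (-b * x ^ 2) := by
  have h : (-1 : ℝ) < n := by
    calc (-1:ℝ) < 0 := by norm_num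
    _ ≤ n := Nat.cast_nonneg n
  simpa [Real.rpow_natCast] using integrable_rpow_mul_exp_neg_mul_sq hb h

lemma integrable_phi : Integrable phi := by
  simp only [funext phi_eq]
  exact (integrable_exp_neg_mul_sq (by norm_num : (0:ℝ) < 1/2)).const_mul _

lemma phi_nonneg (x : ℝ) : 0 ≤ phi x := by
  unfold phi; positivity

lemma integral_phi : ∫ x : ℝ, phi x = 1 := by
  simp only [funext phi_eq]
  rw [integral_const_mul, integral_gaussian]
  rw [show Real.pi / (1/2) = 2 * Real.pi by ring]
  rw [one_div_mul_cancel]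
  positivity

lemma Phi_nonneg (x : ℝ) : 0 ≤ Phi x :=
  setIntegral_nonneg measurableSet_Iic fun t _ => phi_nonneg t

lemma Phi_le_one (x : ℝ) : Phi x ≤ 1 := by
  rw [← integral_phi]
  exact setIntegral_le_integral integrable_phi (Filter.Eventually.of_forall phi_nonneg)

lemma continuous_phi : Continuous phi := by
  simp only [funext phi_eq]
  fun_prop

lemma phi_le (x : ℝ) : phi x ≤ 1 / Real.sqrt (2 * Real.pi) := by
  rw [phi_eq]
  have h : Real.exp (-(1/2) * x ^ 2) ≤ 1 := Real.exp_le_one_iff.2 (by nlinarith [sq_nonneg x])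
  have h2 : (0:ℝ) ≤ 1 / Real.sqrt (2*Real.pi) := by positivity
  calc 1 / Real.sqrt (2*Real.pi) * Real.exp (-(1/2) * x ^ 2)
      ≤ 1 / Real.sqrt (2*Real.pi) * 1 := mul_le_mul_of_nonneg_left h h2
    _ = 1 / Real.sqrt (2*Real.pi) := by ring

lemma Phi_apply (x : ℝ) : Phi x = Phi 0 + ∫ t in (0:ℝ)..x, phi t := by
  have := intervalIntegral.integral_Iic_sub_Iic (f := phi) (μ := volume)
    (integrable_phi.integrableOn (s := Iic 0)) (integrable_phi.integrableOn (s := Iic x))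
  unfold Phi
  linarith [this]

lemma hasDerivAt_Phi (x : ℝ) : HasDerivAt Phi (phi x) x := by
  have h : HasDerivAt (fun y => Phi 0 + ∫ t in (0:ℝ)..y, phi t) (phi x) x := by
    apply HasDerivAt.const_add
    exact intervalIntegral.integral_hasDerivAt_right
      (integrable_phi.intervalIntegrable) (continuous_phi.aestronglyMeasurable.stronglyMeasurableAtFilter)
      continuous_phi.continuousAt
  exact h.congr_of_eventuallyEq (Filter.Eventually.of_forall fun y => Phi_apply y)

lemma integral_x_sq_gauss {p : ℝ} (hp : 0 < p) :
    ∫ x : ℝ, x ^ 2 * Real.exp (-p * x ^ 2) = Real.sqrt (Real.pi / p) / (2 * p) := by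
  have hu : ∀ x : ℝ, HasDerivAt (fun x : ℝ => x) 1 x := fun x => hasDerivAt_id x
  have hv : ∀ x : ℝ, HasDerivAt (fun x : ℝ => -(1/(2*p)) * Real.exp (-p * x ^ 2))
      (x * Real.exp (-p * x ^ 2)) x := by
    intro x
    have h1 : HasDerivAt (fun x : ℝ => -p * x ^ 2) (-p * (2 * x)) x := by
      simpa using ((hasDerivAt_pow 2 x).const_mul (-p))
    have := (h1.exp).const_mul (-(1/(2*p)))
    refine this.congr_deriv ?_
    field_simp [hp.ne']
  have key := integral_mul_deriv_eq_deriv_mul_of_integrable (fun x _ => hu x) (fun x _ => hv x) ?_ ?_ ?_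
  · have e1 : ∀ x : ℝ, x * (x * Real.exp (-p * x ^ 2)) = x ^ 2 * Real.exp (-p * x ^ 2) := by
      intro x; ring
    rw [show (∫ x : ℝ, x ^ 2 * Real.exp (-p * x ^ 2)) = ∫ x : ℝ, x * (x * Real.exp (-p*x^2)) by
      congr 1; ext x; rw [e1]]
    rw [key]
    rw [show (fun x : ℝ => 1 * (-(1/(2*p)) * Real.exp (-p * x ^ 2))) =
      fun x : ℝ => (-(1/(2*p))) * Real.exp (-p * x ^ 2) from funext fun x => by ring]
    rw [MeasureTheory.integral_const_mul, integral_gaussian]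
    field_simp
  · exact (int_pow_gauss 2 hp).congr (Filter.Eventually.of_forall fun x => by
      simp only [Pi.mul_apply]; ring)
  · exact ((integrable_exp_neg_mul_sq hp).const_mul (-(1/(2*p)))).congr
      (Filter.Eventually.of_forall fun x => by simp only [Pi.mul_apply]; ring)
  · exact ((integrable_mul_exp_neg_mul_sq hp).const_mul (-(1/(2*p)))).congr
      (Filter.Eventually.of_forall fun x => by simp only [Pi.mul_apply]; ring)

lemma continuous_Phi : Continuous Phi := by
  rw [continuous_iff_continuousAt]
  exact fun x => (hasDerivAt_Phi x).continuousAt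

noncomputable def K (a : ℝ) : ℝ := ∫ x : ℝ, x ^ 2 * phi x * (Phi (a * x)) ^ 2

noncomputable def Kd (a : ℝ) : ℝ := ∫ x : ℝ, 2 * x ^ 3 * phi x * phi (a * x) * Phi (a * x)

lemma integrable_F (a : ℝ) : Integrable (fun x : ℝ => x ^ 2 * phi x * (Phi (a * x)) ^ 2) := by
  have : (fun x : ℝ => x ^ 2 * phi x * (Phi (a * x)) ^ 2) =
      fun x => (Phi (a*x))^2 * (x^2 * phi x) := funext fun x => by ring
  rw [this]
  apply Integrable.bdd_mul (c := 1) (f := fun x => (Phi (a*x))^2) (g := fun x => x^2 * phi x)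
  · have e : (fun x : ℝ => x^2 * phi x) =
        fun x => (1 / Real.sqrt (2*Real.pi)) * (x^2 * Real.exp (-(1/2)*x^2)) :=
      funext fun x => by rw [phi_eq]; ring
    rw [e]
    exact (int_pow_gauss 2 (by norm_num : (0:ℝ) < 1/2)).const_mul _
  · exact ((continuous_Phi.comp (continuous_const.mul continuous_id)).pow 2).aestronglyMeasurable
  · refine Filter.Eventually.of_forall fun x => ?_
    rw [Real.norm_eq_abs, abs_of_nonneg (by positivity)]
    nlinarith [Phi_nonneg (a*x), Phi_le_one (a*x)]

lemma integrable_Fd (a : ℝ) : Integrable (fun x : ℝ => 2 * x ^ 3 * phi x * phi (a * x) * Phi (a * x)) := by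
  have : (fun x : ℝ => 2 * x ^ 3 * phi x * phi (a * x) * Phi (a * x)) =
      fun x => (phi (a*x) * Phi (a*x)) * (2 * x^3 * phi x) := funext fun x => by ring
  rw [this]
  apply Integrable.bdd_mul (c := 1 / Real.sqrt (2*Real.pi)) (f := fun x => phi (a*x) * Phi (a*x)) (g := fun x => 2 * x^3 * phi x)
  · have e : (fun x : ℝ => 2 * x^3 * phi x) =
        fun x => (2 / Real.sqrt (2*Real.pi)) * (x^3 * Real.exp (-(1/2)*x^2)) :=
      funext fun x => by rw [phi_eq]; ring
    rw [e]
    exact (int_pow_gauss 3 (by norm_num : (0:ℝ) < 1/2)).const_mul _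
  · exact ((continuous_phi.comp (continuous_const.mul continuous_id)).mul
      (continuous_Phi.comp (continuous_const.mul continuous_id))).aestronglyMeasurable
  · refine Filter.Eventually.of_forall fun x => ?_
    rw [Real.norm_eq_abs, abs_of_nonneg (mul_nonneg (phi_nonneg _) (Phi_nonneg _))]
    calc phi (a*x) * Phi (a*x) ≤ phi (a*x) * 1 :=
          mul_le_mul_of_nonneg_left (Phi_le_one _) (phi_nonneg _)
      _ = phi (a*x) := by ring
      _ ≤ 1 / Real.sqrt (2*Real.pi) := phi_le _

lemma hasDerivAt_K (a : ℝ) : HasDerivAt K (Kd a) a := by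
  have bound_int : Integrable (fun x : ℝ => 2 / Real.sqrt (2*Real.pi) * (|x| ^ 3 * phi x)) := by
    apply Integrable.const_mul
    have h3 := (int_pow_gauss 3 (by norm_num : (0:ℝ) < 1/2)).abs
    have e : (fun x : ℝ => |x| ^ 3 * phi x) =
        fun x => (1 / Real.sqrt (2*Real.pi)) * |x ^ 3 * Real.exp (-(1/2)*x^2)| :=
      funext fun x => by
        rw [phi_eq, abs_mul, abs_pow, abs_of_nonneg (Real.exp_pos _).le]; ring
    rw [e]
    exact h3.const_mul _
  have h := hasDerivAt_integral_of_dominated_loc_of_deriv_le (μ := volume) (x₀ := a)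
    (F := fun a x => x ^ 2 * phi x * (Phi (a * x)) ^ 2)
    (F' := fun a x => 2 * x ^ 3 * phi x * phi (a * x) * Phi (a * x))
    (bound := fun x => 2 / Real.sqrt (2*Real.pi) * (|x| ^ 3 * phi x))
    (s := Metric.ball a 1) (Metric.ball_mem_nhds a one_pos)
    (Filter.Eventually.of_forall fun a' =>
      (((continuous_pow 2).mul continuous_phi).mul
        ((continuous_Phi.comp (continuous_const.mul continuous_id)).pow 2)).aestronglyMeasurable)
    (integrable_F a)
    (((continuous_const.mul (continuous_pow 3)).mul continuous_phi |>.mul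
        (continuous_phi.comp (continuous_const.mul continuous_id)) |>.mul
        (continuous_Phi.comp (continuous_const.mul continuous_id))).aestronglyMeasurable)
    (Filter.Eventually.of_forall fun x a' _ => ?_) bound_int
    (Filter.Eventually.of_forall fun x a' _ => ?_)
  · exact h.2
  · -- bound
    rw [Real.norm_eq_abs]
    have h1 : |2 * x ^ 3 * phi x * phi (a' * x) * Phi (a' * x)| ≤
        |2 * x ^ 3 * phi x| * (1 / Real.sqrt (2*Real.pi)) * 1 := by
      rw [abs_mul, abs_mul]
      have hB : |phi (a' * x)| ≤ 1 / Real.sqrt (2*Real.pi) := by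
        rw [abs_of_nonneg (phi_nonneg _)]; exact phi_le _
      have hC : |Phi (a' * x)| ≤ 1 := by
        rw [abs_of_nonneg (Phi_nonneg _)]; exact Phi_le_one _
      exact mul_le_mul (mul_le_mul_of_nonneg_left hB (abs_nonneg _)) hC (abs_nonneg _)
        (by positivity)
    calc |2 * x ^ 3 * phi x * phi (a' * x) * Phi (a' * x)|
        ≤ |2 * x ^ 3 * phi x| * (1 / Real.sqrt (2*Real.pi)) * 1 := h1
      _ = 2 / Real.sqrt (2*Real.pi) * (|x| ^ 3 * phi x) := by
          rw [abs_mul, abs_mul, abs_pow, abs_of_nonneg (phi_nonneg x)]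
          rw [abs_of_nonneg (by norm_num : (0:ℝ) ≤ 2)]
          ring
  · -- derivative
    have hinner : HasDerivAt (fun a : ℝ => a * x) x a' := by
      simpa using (hasDerivAt_id a').mul_const x
    have hPhiax : HasDerivAt (fun a : ℝ => Phi (a * x)) (phi (a' * x) * x) a' :=
      ((hasDerivAt_Phi (a' * x)).comp a' hinner :)
    have hsq : HasDerivAt (fun a : ℝ => (Phi (a * x)) ^ 2)
        (2 * Phi (a' * x) ^ 1 * (phi (a' * x) * x)) a' := by
      exact (hPhiax.pow 2).congr_deriv (by norm_num)
    have := hsq.const_mul (x ^ 2 * phi x)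
    refine this.congr_deriv ?_
    ring

lemma sqrt_two_pi_sq : Real.sqrt (2*Real.pi) * Real.sqrt (2*Real.pi) = 2*Real.pi :=
  Real.mul_self_sqrt (by positivity)

lemma Kd_eq (a : ℝ) :
    Kd a = a / Real.pi * (1 / ((1+a^2) * (1+2*a^2) * Real.sqrt (1+2*a^2))
      + 2 / ((1+a^2)^2 * Real.sqrt (1+2*a^2))) := by
  set c : ℝ := 1 + a^2 with hc_def
  set b : ℝ := 1 + 2*a^2 with hb_def
  have hc : 0 < c := by positivity
  have hb : 0 < b := by positivity
  -- integration by parts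
  have hu : ∀ x : ℝ, HasDerivAt (fun x => Phi (a*x)) (phi (a*x) * a) x := by
    intro x
    have hinner : HasDerivAt (fun x : ℝ => a * x) a x := by
      simpa using (hasDerivAt_id x).const_mul a
    exact (hasDerivAt_Phi (a*x)).comp x hinner
  have hv : ∀ x : ℝ, HasDerivAt
      (fun x : ℝ => -(1/Real.pi) * ((x^2/c + 2/c^2) * Real.exp (-(c/2) * x^2)))
      ((1/Real.pi) * (x^3 * Real.exp (-(c/2) * x^2))) x := by
    intro x
    have hp : HasDerivAt (fun x : ℝ => x^2/c + 2/c^2) (2*x/c) x := by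
      have := ((hasDerivAt_pow 2 x).div_const c).add_const (2/c^2)
      simpa using this.congr_deriv (by ring)
    have hq : HasDerivAt (fun x : ℝ => Real.exp (-(c/2) * x^2)) (-(c/2) * (2*x) * Real.exp (-(c/2)*x^2)) x := by
      have h1 : HasDerivAt (fun x : ℝ => -(c/2) * x ^ 2) (-(c/2) * (2 * x)) x := by
        simpa using (hasDerivAt_pow 2 x).const_mul (-(c/2))
      simpa [mul_comm] using h1.exp
    have := (hp.mul hq).const_mul (-(1/Real.pi))
    refine this.congr_deriv ?_
    field_simp [hc.ne']
    ring
  have int_v' : Integrable (fun x : ℝ => (1/Real.pi) * (x^3 * Real.exp (-(c/2) * x^2))) := by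
    have : (0:ℝ) < c/2 := by positivity
    have h := (int_pow_gauss 3 this).const_mul (1/Real.pi)
    apply h.congr (Filter.Eventually.of_forall fun x => by norm_num [neg_div])
  have int_v : Integrable (fun x : ℝ => -(1/Real.pi) * ((x^2/c + 2/c^2) * Real.exp (-(c/2) * x^2))) := by
    have h2 : (0:ℝ) < c/2 := by positivity
    have i1 := (int_pow_gauss 2 h2).const_mul (1/c)
    have i2 := (integrable_exp_neg_mul_sq h2).const_mul (2/c^2)
    have h3 := (i1.add i2).const_mul (-(1/Real.pi))
    apply h3.congr (Filter.Eventually.of_forall fun x => by simp only [Pi.add_apply]; ring)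
  have key := integral_mul_deriv_eq_deriv_mul_of_integrable (fun x _ => hu x) (fun x _ => hv x) ?_ ?_ ?_
  · -- use key to compute Kd
    have lhs_eq : Kd a = ∫ x : ℝ, Phi (a*x) * ((1/Real.pi) * (x^3 * Real.exp (-(c/2) * x^2))) := by
      unfold Kd
      congr 1
      ext x
      rw [phi_eq x, phi_eq (a*x)]
      have hexp : Real.exp (-(1/2)*x^2) * Real.exp (-(1/2)*(a*x)^2) = Real.exp (-(c/2)*x^2) := by
        rw [← Real.exp_add]; congr 1; rw [hc_def]; ring
      calc 2*x^3*(1/Real.sqrt (2*Real.pi)*Real.exp (-(1/2)*x^2))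
            *(1/Real.sqrt (2*Real.pi)*Real.exp (-(1/2)*(a*x)^2))*Phi (a*x)
          = 2*x^3*(Real.exp (-(1/2)*x^2) * Real.exp (-(1/2)*(a*x)^2))*Phi (a*x)
            / (Real.sqrt (2*Real.pi)*Real.sqrt (2*Real.pi)) := by ring
        _ = 2*x^3*Real.exp (-(c/2)*x^2)*Phi (a*x) / (2*Real.pi) := by
            rw [hexp, sqrt_two_pi_sq]
        _ = Phi (a*x) * ((1/Real.pi) * (x^3 * Real.exp (-(c/2) * x^2))) := by ring
    have hb2 : (0:ℝ) < b/2 := by positivity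
    have rhs_eq : (∫ x : ℝ, phi (a*x) * a * (-(1/Real.pi) * ((x^2/c + 2/c^2) * Real.exp (-(c/2) * x^2))))
        = (-(a/(Real.pi*Real.sqrt (2*Real.pi)*c))) * (Real.sqrt (Real.pi/(b/2))/(2*(b/2)))
          + (-(2*a/(Real.pi*Real.sqrt (2*Real.pi)*c^2))) * Real.sqrt (Real.pi/(b/2)) := by
      have point : ∀ x : ℝ, phi (a*x) * a * (-(1/Real.pi) * ((x^2/c + 2/c^2) * Real.exp (-(c/2) * x^2)))
          = (-(a/(Real.pi*Real.sqrt (2*Real.pi)*c))) * (x^2 * Real.exp (-(b/2)*x^2))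
            + (-(2*a/(Real.pi*Real.sqrt (2*Real.pi)*c^2))) * Real.exp (-(b/2)*x^2) := by
        intro x
        rw [phi_eq (a*x)]
        have hexp2 : Real.exp (-(1/2)*(a*x)^2) * Real.exp (-(c/2)*x^2) = Real.exp (-(b/2)*x^2) := by
          rw [← Real.exp_add]; congr 1; rw [hc_def, hb_def]; ring
        calc (1/Real.sqrt (2*Real.pi)*Real.exp (-(1/2)*(a*x)^2)) * a
              * (-(1/Real.pi) * ((x^2/c + 2/c^2) * Real.exp (-(c/2) * x^2)))
            = (Real.exp (-(1/2)*(a*x)^2) * Real.exp (-(c/2)*x^2))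
              * (-(a/(Real.pi*Real.sqrt (2*Real.pi)))) * (x^2/c + 2/c^2) := by ring
          _ = Real.exp (-(b/2)*x^2) * (-(a/(Real.pi*Real.sqrt (2*Real.pi)))) * (x^2/c + 2/c^2) := by
              rw [hexp2]
          _ = (-(a/(Real.pi*Real.sqrt (2*Real.pi)*c))) * (x^2 * Real.exp (-(b/2)*x^2))
              + (-(2*a/(Real.pi*Real.sqrt (2*Real.pi)*c^2))) * Real.exp (-(b/2)*x^2) := by
              field_simp
              ring
      rw [funext point]
      rw [integral_add (((int_pow_gauss 2 hb2).const_mul _)) ((integrable_exp_neg_mul_sq hb2).const_mul _)]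
      rw [MeasureTheory.integral_const_mul, MeasureTheory.integral_const_mul,
        integral_x_sq_gauss hb2, integral_gaussian]
    rw [lhs_eq, key, rhs_eq]
    -- final algebra
    have h1 : Real.pi / (b/2) = 2*Real.pi/b := by rw [div_div_eq_mul_div]; ring
    rw [h1, Real.sqrt_div (by positivity : (0:ℝ) ≤ 2*Real.pi) b]
    have hsb : 0 < Real.sqrt b := Real.sqrt_pos.2 hb
    have hsb2 : Real.sqrt b * Real.sqrt b = b := Real.mul_self_sqrt hb.le
    have hs2p : 0 < Real.sqrt (2*Real.pi) := Real.sqrt_pos.2 (by positivity)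
    rw [hc_def, hb_def] at *
    field_simp
    ring_nf
  · exact Integrable.bdd_mul (c := 1) int_v'
      (continuous_Phi.comp (continuous_const.mul continuous_id)).aestronglyMeasurable
      (Filter.Eventually.of_forall fun x => by rw [Real.norm_eq_abs, abs_of_nonneg (Phi_nonneg _)]; exact Phi_le_one _)
  · exact Integrable.bdd_mul (c := (1/Real.sqrt (2*Real.pi)) * |a|) int_v
      ((continuous_phi.comp (continuous_const.mul continuous_id)).mul continuous_const).aestronglyMeasurable
      (Filter.Eventually.of_forall fun x => by
        rw [Real.norm_eq_abs, abs_mul, abs_of_nonneg (phi_nonneg _)]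
        exact mul_le_mul_of_nonneg_right (phi_le _) (abs_nonneg a))
  · exact Integrable.bdd_mul (c := 1) int_v
      (continuous_Phi.comp (continuous_const.mul continuous_id)).aestronglyMeasurable
      (Filter.Eventually.of_forall fun x => by rw [Real.norm_eq_abs, abs_of_nonneg (Phi_nonneg _)]; exact Phi_le_one _)

noncomputable def R (a : ℝ) : ℝ :=
  1/4 + a^2/(Real.pi*(1+a^2)*Real.sqrt (1+2*a^2))
    + (1/(2*Real.pi)) * Real.arctan (a^2/Real.sqrt (1+2*a^2))

lemma hasDerivAt_R (a : ℝ) : HasDerivAt R (Kd a) a := by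
  rw [Kd_eq]
  have hbpos : (0:ℝ) < 1 + 2*a^2 := by positivity
  set s : ℝ := Real.sqrt (1+2*a^2) with hs_def
  have hs_pos : 0 < s := Real.sqrt_pos.2 hbpos
  have hss : s * s = 1 + 2*a^2 := Real.mul_self_sqrt hbpos.le
  have hcpos : (0:ℝ) < 1 + a^2 := by positivity
  -- derivative of sqrt(1+2a^2)
  have hsqrt : HasDerivAt (fun a : ℝ => Real.sqrt (1+2*a^2)) (2*a/s) a := by
    have hinner : HasDerivAt (fun a : ℝ => 1+2*a^2) (4*a) a := by
      have := ((hasDerivAt_pow 2 a).const_mul 2).const_add 1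
      exact this.congr_deriv (by ring)
    have := (Real.hasDerivAt_sqrt hbpos.ne').comp a hinner
    refine this.congr_deriv ?_
    field_simp [hs_def]
    ring
  have hpow : HasDerivAt (fun a : ℝ => a^2) (2*a) a := by
    simpa using hasDerivAt_pow 2 a
  -- denominator of term 2
  have hden : HasDerivAt (fun a : ℝ => Real.pi*(1+a^2)*Real.sqrt (1+2*a^2))
      (Real.pi*(2*a)*s + (Real.pi*(1+a^2))*(2*a/s)) a := by
    have h1 : HasDerivAt (fun a : ℝ => Real.pi*(1+a^2)) (Real.pi*(2*a)) a := by
      simpa using (((hasDerivAt_pow 2 a).const_add 1).const_mul Real.pi)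
    exact h1.mul hsqrt
  have hden_ne : Real.pi*(1+a^2)*s ≠ 0 := by positivity
  have hT2 : HasDerivAt (fun a : ℝ => a^2/(Real.pi*(1+a^2)*Real.sqrt (1+2*a^2)))
      ((2*a*(Real.pi*(1+a^2)*s) - a^2*(Real.pi*(2*a)*s + (Real.pi*(1+a^2))*(2*a/s)))
        /(Real.pi*(1+a^2)*s)^2) a := hpow.div hden hden_ne
  -- term 3
  have hw : HasDerivAt (fun a : ℝ => a^2/Real.sqrt (1+2*a^2))
      ((2*a*s - a^2*(2*a/s))/s^2) a := hpow.div hsqrt hs_pos.ne'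
  have hT3 : HasDerivAt (fun a : ℝ => (1/(2*Real.pi)) * Real.arctan (a^2/Real.sqrt (1+2*a^2)))
      ((1/(2*Real.pi)) * ((1/(1+(a^2/s)^2)) * ((2*a*s - a^2*(2*a/s))/s^2))) a := by
    have := ((Real.hasDerivAt_arctan (a^2/s)).comp a hw).const_mul (1/(2*Real.pi))
    simpa [hs_def] using this
  have hpi : Real.pi ≠ 0 := Real.pi_ne_zero
  have hT2' := hT2.congr_deriv (show _ =
      2*a*(1+a^2-a^4)/(Real.pi*(1+a^2)^2*(1+2*a^2)*s) by
    rw [show (1+2*a^2 : ℝ) = s^2 by linear_combination -hss]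
    rw [show (1+a^2-a^4 : ℝ) = s^2 - a^2*(1+a^2) by linear_combination -hss]
    field_simp
    ring)
  have hT3' := hT3.congr_deriv (show _ = a/(Real.pi*(1+a^2)*s) by
    rw [show (1:ℝ)+(a^2/s)^2 = (1+a^2)^2/s^2 by
      field_simp; linear_combination hss]
    rw [show 2*a*s - a^2*(2*a/s) = 2*a*(1+a^2)/s by
      field_simp; linear_combination a*hss]
    field_simp)
  have total := ((hT2'.const_add (1/4:ℝ)).add hT3')
  have hR : R = fun a : ℝ => 1/4 + a^2/(Real.pi*(1+a^2)*Real.sqrt (1+2*a^2))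
      + (1/(2*Real.pi)) * Real.arctan (a^2/Real.sqrt (1+2*a^2)) := rfl
  rw [hR]
  refine total.congr_deriv ?_
  field_simp
  ring

lemma Phi_zero : Phi 0 = 1/2 := by
  have heven : ∀ x : ℝ, phi (-x) = phi x := fun x => by unfold phi; rw [neg_pow]; ring_nf
  have h1 : (∫ x in Set.Iic (0:ℝ), phi x) = ∫ x in Set.Ioi (0:ℝ), phi x := by
    have h := integral_comp_neg_Iic (0:ℝ) phi
    simp only [heven, neg_zero] at h
    exact h
  have h2 : (∫ x in Set.Iic (0:ℝ), phi x) + (∫ x in Set.Ioi (0:ℝ), phi x) = ∫ x : ℝ, phi x :=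
    intervalIntegral.integral_Iic_add_Ioi integrable_phi.integrableOn integrable_phi.integrableOn
  rw [integral_phi] at h2
  unfold Phi
  linarith [h1, h2]

lemma K_zero : K 0 = 1/4 := by
  unfold K
  have h : ∀ x : ℝ, x ^ 2 * phi x * (Phi ((0:ℝ) * x)) ^ 2 =
      (1/(4*Real.sqrt (2*Real.pi))) * (x^2 * Real.exp (-(1/2)*x^2)) := by
    intro x
    rw [zero_mul, Phi_zero, phi_eq]
    ring
  rw [funext h, MeasureTheory.integral_const_mul, integral_x_sq_gauss (by norm_num : (0:ℝ) < 1/2)]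
  rw [show Real.pi / (1/2) = 2*Real.pi by ring]
  have : Real.sqrt (2*Real.pi) > 0 := Real.sqrt_pos.2 (by positivity)
  field_simp

lemma R_zero : R 0 = 1/4 := by
  unfold R
  norm_num

lemma K_eq_R (a : ℝ) : K a = R a := by
  have hconst : ∀ x y : ℝ, K x - R x = K y - R y := by
    apply is_const_of_deriv_eq_zero
    · intro x
      exact ((hasDerivAt_K x).sub (hasDerivAt_R x)).differentiableAt
    · intro x
      have h := ((hasDerivAt_K x).sub (hasDerivAt_R x))
      exact h.deriv.trans (sub_self _)
  have := hconst a 0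
  rw [K_zero, R_zero] at this
  linarith

theorem stmt4 (lam : ℝ) (hlam : 0 < lam) :
    ∫ x : ℝ, x ^ 2 * phi x * (Phi (x / lam)) ^ 2 =
      1 / 4 + lam / (Real.pi * (1 + lam ^ 2) * Real.sqrt (2 + lam ^ 2)) +
        (1 / (2 * Real.pi)) * Real.arctan (1 / (lam * Real.sqrt (2 + lam ^ 2))) := by
  have hK : (∫ x : ℝ, x ^ 2 * phi x * (Phi (x / lam)) ^ 2) = K (1/lam) := by
    unfold K
    congr 1
    ext x
    rw [show (1/lam) * x = x / lam by ring]
  rw [hK, K_eq_R]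
  unfold R
  set t : ℝ := Real.sqrt (2 + lam^2) with ht_def
  have ht_pos : 0 < t := Real.sqrt_pos.2 (by positivity)
  have htt : t * t = 2 + lam^2 := Real.mul_self_sqrt (by positivity)
  have hsq : Real.sqrt (1 + 2*(1/lam)^2) = t / lam := by
    rw [show 1 + 2*(1/lam)^2 = (2 + lam^2)/lam^2 by field_simp; ring]
    rw [Real.sqrt_div (by positivity) _, ht_def, Real.sqrt_sq hlam.le]
  rw [hsq]
  have harg : (1/lam)^2 / (t/lam) = 1/(lam*t) := by field_simp
  rw [harg]
  have ht2 : (1/lam)^2/(Real.pi*(1+(1/lam)^2)*(t/lam)) = lam/(Real.pi*(1+lam^2)*t) := by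
    rw [div_eq_div_iff (by positivity) (by positivity)]
    field_simp
    ring
  rw [ht2]
end
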